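/- The set S'_{p,q-1} = {g ∈ GL(n-2,F) : g_{n-2,j} = 0 for j ∈ {1,…,p−q+1} ∪ {p−q+3, p−q+5, …, p+q−3}} equals the product set P_{n-2}·H_{p-1,q-1}, where P_{n-2} is the mirabolic subgroup of GL(n-2,F) and H_{p-1,q-1} = w_{p-1,q-1} M_{(p-1,q-1)} w_{p-1,q-1}^{-1}. -/
import Mathlib


open scoped MatrixGroups

def sig0 (p q j : ℕ) : ℕ :=
  if j ≤ p - q ∨ j = p + q - 1 then j
  else if j ≤ p - 1 then 2 * j - (p - q)
  else 2 * j + 1 - (p + q)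

def wMat (F : Type*) [Field F] (p q m : ℕ) : Matrix (Fin m) (Fin m) F :=
  Matrix.of fun i j => if (i : ℕ) = sig0 p q (j : ℕ) then 1 else 0

def tau0 (p q j : ℕ) : ℕ :=
  if j ≤ p - q ∨ j = p + q - 1 then j
  else if (j + p + q) % 2 = 0 then (j + p - q) / 2
  else (j + p + q - 1) / 2

lemma sig0_lt (P Q : ℕ) (hQ : 1 ≤ Q) (hPQ : Q ≤ P) {j : ℕ} (hj : j < P + Q) :
    sig0 P Q j < P + Q := by unfold sig0; split_ifs <;> omega

lemma tau0_lt (P Q : ℕ) (hQ : 1 ≤ Q) (hPQ : Q ≤ P) {j : ℕ} (hj : j < P + Q) :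
    tau0 P Q j < P + Q := by unfold tau0; split_ifs <;> omega

lemma tau0_sig0 (P Q : ℕ) (hQ : 1 ≤ Q) (hPQ : Q ≤ P) {j : ℕ} (hj : j < P + Q) :
    tau0 P Q (sig0 P Q j) = j := by unfold sig0 tau0; split_ifs <;> omega

lemma sig0_tau0 (P Q : ℕ) (hQ : 1 ≤ Q) (hPQ : Q ≤ P) {j : ℕ} (hj : j < P + Q) :
    sig0 P Q (tau0 P Q j) = j := by unfold sig0 tau0; split_ifs <;> omega

lemma tau0_lt_iff (P Q j : ℕ) (hQ : 1 ≤ Q) (hPQ : Q ≤ P) (hj : j < P + Q) :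
    tau0 P Q j < P ↔ (j ≤ P - Q ∨ ∃ c, 1 ≤ c ∧ c ≤ Q - 1 ∧ j = P - Q + 2 * c) := by
  unfold tau0
  constructor
  · intro h
    split_ifs at h with h1 h2
    · left; omega
    · right; exact ⟨(j - (P - Q)) / 2, by omega, by omega, by omega⟩
    · exact absurd h (by omega)
  · rintro (h | ⟨c, hc1, hc2, hc3⟩) <;> split_ifs <;> omega

lemma tau0_lt_iff' (p q j : ℕ) (hq : 2 ≤ q) (hqp : q ≤ p) (hj : j < (p - 1) + (q - 1)) :
    tau0 (p - 1) (q - 1) j < p - 1 ↔ (j + 1 ≤ p - q + 1 ∨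
      ∃ c : ℕ, 1 ≤ c ∧ c ≤ q - 2 ∧ j + 1 = p - q + 1 + 2 * c) := by
  rw [tau0_lt_iff (p - 1) (q - 1) j (by omega) (by omega) hj]
  constructor
  · rintro (h | ⟨c, hc1, hc2, hc3⟩)
    · left; omega
    · right; exact ⟨c, hc1, by omega, by omega⟩
  · rintro (h | ⟨c, hc1, hc2, hc3⟩)
    · left; omega
    · right; exact ⟨c, hc1, by omega, by omega⟩

/-- sum of `if l = c then v l else 0` over all `l`. -/
lemma sum_ite_eq_val {m : ℕ} {F : Type*} [Field F] (c : Fin m) (v : Fin m → F) :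
    (∑ l : Fin m, if l = c then v l else 0) = v c := by
  rw [Finset.sum_ite_eq' Finset.univ c v]
  simp

/-- With `p ≥ q ≥ 2` and `n = p+q = k+3` (so `GL(n-2,F) = GL(Fin (k+1), F)`):
`S'_{p,q-1} = {g ∈ GL(n-2,F) : g_{n-2,j} = 0 for (1-indexed)
j ∈ {1,…,p-q+1} ∪ {p-q+3, p-q+5, …, p+q-3}}` equals the product set
`P_{n-2}·H_{p-1,q-1}` with `H_{p-1,q-1} = w_{p-1,q-1} M_{(p-1,q-1)} w_{p-1,q-1}⁻¹`. -/
theorem stmt16 (F : Type*) [Field F] (p q k : ℕ) (hq : 2 ≤ q) (hqp : q ≤ p)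
    (hn : k + 3 = p + q) :
    {g : GL (Fin (k + 1)) F |
      ∀ j : Fin (k + 1),
        ((j : ℕ) + 1 ≤ p - q + 1 ∨
          ∃ c : ℕ, 1 ≤ c ∧ c ≤ q - 2 ∧ (j : ℕ) + 1 = p - q + 1 + 2 * c) →
        (g : Matrix (Fin (k + 1)) (Fin (k + 1)) F) (Fin.last k) j = 0} =
    {g : GL (Fin (k + 1)) F |
      ∃ a b : GL (Fin (k + 1)) F,
        (∀ j : Fin (k + 1), (a : Matrix (Fin (k + 1)) (Fin (k + 1)) F) (Fin.last k) j =
          if j = Fin.last k then 1 else 0) ∧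
        (∃ h : Matrix (Fin (k + 1)) (Fin (k + 1)) F, IsUnit h ∧
          (∀ i j : Fin (k + 1), (((i : ℕ) < p - 1) ≠ ((j : ℕ) < p - 1)) → h i j = 0) ∧
          (b : Matrix (Fin (k + 1)) (Fin (k + 1)) F) * wMat F (p - 1) (q - 1) (k + 1) =
            wMat F (p - 1) (q - 1) (k + 1) * h) ∧
        g = a * b} := by
  have hQ1 : 1 ≤ q - 1 := by omega
  have hPQ : q - 1 ≤ p - 1 := by omega
  have hsum : (p - 1) + (q - 1) = k + 1 := by omega
  set L : Fin (k + 1) := Fin.last k with hLdef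
  have hLval : (L : ℕ) = k := rfl
  set w : Matrix (Fin (k + 1)) (Fin (k + 1)) F := wMat F (p - 1) (q - 1) (k + 1) with hwdef
  -- the permutation σ
  let σ : Equiv.Perm (Fin (k + 1)) :=
    { toFun := fun j => ⟨sig0 (p - 1) (q - 1) (j : ℕ), by
        have h1 := j.isLt
        have := sig0_lt (p - 1) (q - 1) hQ1 hPQ (j := (j : ℕ)) (by omega)
        omega⟩
      invFun := fun j => ⟨tau0 (p - 1) (q - 1) (j : ℕ), by
        have h1 := j.isLt
        have := tau0_lt (p - 1) (q - 1) hQ1 hPQ (j := (j : ℕ)) (by omega)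
        omega⟩
      left_inv := fun j => Fin.ext (by
        have h1 := j.isLt
        exact tau0_sig0 (p - 1) (q - 1) hQ1 hPQ (by omega))
      right_inv := fun j => Fin.ext (by
        have h1 := j.isLt
        exact sig0_tau0 (p - 1) (q - 1) hQ1 hPQ (by omega)) }
  have hσval : ∀ j : Fin (k + 1), ((σ j : Fin (k + 1)) : ℕ) = sig0 (p - 1) (q - 1) (j : ℕ) :=
    fun j => rfl
  have hσsymmval : ∀ j : Fin (k + 1),
      ((σ.symm j : Fin (k + 1)) : ℕ) = tau0 (p - 1) (q - 1) (j : ℕ) := fun j => rfl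
  have hσL : σ L = L := by
    apply Fin.ext
    rw [hσval, hLval]
    unfold sig0; split_ifs <;> omega
  have hw : ∀ i j : Fin (k + 1), w i j = if i = σ j then 1 else 0 := by
    intro i j
    show (if (i : ℕ) = sig0 (p - 1) (q - 1) (j : ℕ) then (1 : F) else 0) = _
    congr 1
    rw [eq_iff_iff, Fin.ext_iff, hσval]
  have hwL : ∀ l : Fin (k + 1), (L = σ l) ↔ (l = L) := by
    intro l
    constructor
    · intro e
      apply σ.injective
      rw [hσL, ← e]
    · intro e; rw [e, hσL]
  -- membership characterization
  have hmem : ∀ jj : Fin (k + 1),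
      ((σ.symm jj : ℕ) < p - 1 ↔ ((jj : ℕ) + 1 ≤ p - q + 1 ∨
        ∃ c : ℕ, 1 ≤ c ∧ c ≤ q - 2 ∧ (jj : ℕ) + 1 = p - q + 1 + 2 * c)) := by
    intro jj
    have h1 := jj.isLt
    rw [hσsymmval]
    exact tau0_lt_iff' p q (jj : ℕ) hq hqp (by omega)
  -- row-L multiplication through w
  have hwmul : ∀ (A : Matrix (Fin (k + 1)) (Fin (k + 1)) F) (c : Fin (k + 1)),
      (w * A) L c = A L c := by
    intro A c
    rw [Matrix.mul_apply]
    have key : ∀ l : Fin (k + 1), w L l * A l c = if l = L then A l c else 0 := by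
      intro l
      rw [hw]
      by_cases e : l = L
      · rw [if_pos ((hwL l).mpr e), if_pos e, one_mul, e]
      · have h2 : ¬ (L = σ l) := fun h' => e ((hwL l).mp h')
        rw [if_neg h2, if_neg e, zero_mul]
    rw [Finset.sum_congr rfl (fun l _ => key l), sum_ite_eq_val L (fun l => A l c)]
  ext g
  simp only [Set.mem_setOf_eq]
  constructor
  · -- hard direction: construct a, b
    intro hg
    -- u is the permuted last row of g
    set u : Fin (k + 1) → F := fun j => (g : Matrix (Fin (k + 1)) (Fin (k + 1)) F) L (σ j)
      with hudef
    have huval : ∀ c : Fin (k + 1),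
        u (σ.symm c) = (g : Matrix (Fin (k + 1)) (Fin (k + 1)) F) L c := by
      intro c
      rw [hudef]
      show (g : Matrix (Fin (k + 1)) (Fin (k + 1)) F) L (σ (σ.symm c)) = _
      rw [Equiv.apply_symm_apply]
    have hu0 : ∀ j : Fin (k + 1), (j : ℕ) < p - 1 → u j = 0 := by
      intro j hj
      apply hg (σ j)
      apply (hmem (σ j)).mp
      rwa [Equiv.symm_apply_apply]
    have hex : ∃ j0, u j0 ≠ 0 := by
      by_contra hall
      push_neg at hall
      have hrow : ∀ c, (g : Matrix (Fin (k + 1)) (Fin (k + 1)) F) L c = 0 := by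
        intro c
        rw [← huval c]
        exact hall _
      have e : ((g : Matrix (Fin (k + 1)) (Fin (k + 1)) F) *
          ((g⁻¹ : GL (Fin (k + 1)) F) : Matrix (Fin (k + 1)) (Fin (k + 1)) F)) L L
          = (1 : Matrix (Fin (k + 1)) (Fin (k + 1)) F) L L := by
        rw [← Units.val_mul, mul_inv_cancel, Units.val_one]
      rw [Matrix.mul_apply] at e
      simp [hrow, Matrix.one_apply] at e
    obtain ⟨j0, hj0⟩ := hex
    have hj0P : p - 1 ≤ (j0 : ℕ) := by
      by_contra hc
      push_neg at hc
      exact hj0 (hu0 j0 hc)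
    have hLP : ¬ ((L : ℕ) < p - 1) := by rw [hLval]; omega
    set sw : Equiv.Perm (Fin (k + 1)) := Equiv.swap j0 L with hswdef
    set hM : Matrix (Fin (k + 1)) (Fin (k + 1)) F := (sw.permMatrix F).updateRow L u with hMdef
    have hperm : ∀ i j : Fin (k + 1), sw.permMatrix F i j = if sw i = j then 1 else 0 := by
      intro i j
      simp [Equiv.Perm.permMatrix, PEquiv.toMatrix_apply, Equiv.toPEquiv_apply]
    have hu_decomp : u = ∑ i, u (sw i) • (sw.permMatrix F) i := by
      ext c
      have key : ∀ i : Fin (k + 1),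
          u (sw i) • (sw.permMatrix F) i c = if i = sw.symm c then u (sw i) else 0 := by
        intro i
        rw [hperm]
        by_cases e : i = sw.symm c
        · rw [if_pos (by rw [e, Equiv.apply_symm_apply]), if_pos e, smul_eq_mul, mul_one]
        · rw [if_neg (fun h' => e (by rw [← h', Equiv.symm_apply_apply])), if_neg e, smul_zero]
      rw [Finset.sum_apply]
      simp only [Pi.smul_apply] 
      rw [Finset.sum_congr rfl (fun i _ => key i),
        sum_ite_eq_val (sw.symm c) (fun i => u (sw i)), Equiv.apply_symm_apply]
    have hMunit : IsUnit hM := by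
      rw [Matrix.isUnit_iff_isUnit_det]
      have hdet : hM.det = u (sw L) • (sw.permMatrix F).det := by
        conv_lhs => rw [hMdef, hu_decomp]
        exact Matrix.det_updateRow_sum _ _ _
      rw [hdet, Matrix.det_permutation]
      have hswL : sw L = j0 := Equiv.swap_apply_right j0 L
      rw [hswL, smul_eq_mul]
      apply isUnit_iff_ne_zero.mpr
      apply mul_ne_zero hj0
      rcases Int.units_eq_one_or (Equiv.Perm.sign sw) with hs | hs <;> rw [hs] <;> norm_num
    -- block property
    have hblk : ∀ i j : Fin (k + 1), (((i : ℕ) < p - 1) ≠ ((j : ℕ) < p - 1)) → hM i j = 0 := by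
      intro i j hij
      by_cases hi : i = L
      · subst hi
        rw [hMdef, Matrix.updateRow_self]
        apply hu0
        by_contra hjc
        exact hij (by rw [eq_iff_iff]; constructor <;> intro <;> [exact absurd ‹_› hLP; omega])
      · rw [hMdef, Matrix.updateRow_apply, if_neg hi, hperm]
        rw [if_neg]
        intro e
        by_cases hij0 : i = j0
        · subst hij0
          rw [hswdef, Equiv.swap_apply_left] at e
          subst e
          exact hij (by rw [eq_iff_iff]; constructor <;> intro <;> omega)
        · rw [hswdef, Equiv.swap_apply_of_ne_of_ne hij0 hi] at e
          subst e
          exact hij rfl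
    -- w is invertible with inverse its transpose
    have hwwT : w * w.transpose = 1 := by
      ext i j
      rw [Matrix.mul_apply, Matrix.one_apply]
      have key : ∀ l : Fin (k + 1), w i l * w.transpose l j =
          if l = σ.symm i then (if i = j then 1 else 0) else 0 := by
        intro l
        rw [Matrix.transpose_apply, hw, hw]
        by_cases e : l = σ.symm i
        · subst e
          simp only [Equiv.apply_symm_apply]
          by_cases e2 : i = j
          · subst e2; simp
          · have e3 : ¬ (j = i) := fun h' => e2 h'.symm
            simp [e2, e3]
        · have h2 : ¬ (i = σ l) := fun h' => e (by rw [h', Equiv.symm_apply_apply])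
          rw [if_neg h2, if_neg e, zero_mul]
      rw [Finset.sum_congr rfl (fun l _ => key l),
        sum_ite_eq_val (σ.symm i) (fun _ => if i = j then (1 : F) else 0)]
    have hwTw : w.transpose * w = 1 := by
      ext i j
      rw [Matrix.mul_apply, Matrix.one_apply]
      have key : ∀ l : Fin (k + 1), w.transpose i l * w l j =
          if l = σ i then (if i = j then 1 else 0) else 0 := by
        intro l
        rw [Matrix.transpose_apply, hw, hw]
        by_cases e : l = σ i
        · subst e
          rw [if_pos rfl, if_pos rfl, one_mul]
          by_cases e2 : i = j
          · rw [if_pos (by rw [e2]), if_pos e2]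
          · rw [if_neg (fun h' => e2 (σ.injective h')), if_neg e2]
        · rw [if_neg e, if_neg e, zero_mul]
      rw [Finset.sum_congr rfl (fun l _ => key l),
        sum_ite_eq_val (σ i) (fun _ => if i = j then (1 : F) else 0)]
    set wU : GL (Fin (k + 1)) F := ⟨w, w.transpose, hwwT, hwTw⟩ with hwU
    set b : GL (Fin (k + 1)) F := wU * hMunit.unit * wU⁻¹ with hbdef
    have hbval : (b : Matrix (Fin (k + 1)) (Fin (k + 1)) F) = w * hM * w.transpose := by
      rw [hbdef]
      simp only [Units.val_mul]
      rw [hMunit.unit_spec]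
      rfl
    have hbw : (b : Matrix (Fin (k + 1)) (Fin (k + 1)) F) * w = w * hM := by
      rw [hbval, Matrix.mul_assoc, Matrix.mul_assoc, hwTw, Matrix.mul_one]
    -- last row of b equals last row of g
    have browL : ∀ c, (b : Matrix (Fin (k + 1)) (Fin (k + 1)) F) L c =
        (g : Matrix (Fin (k + 1)) (Fin (k + 1)) F) L c := by
      intro c
      rw [hbval, Matrix.mul_assoc, hwmul (hM * w.transpose) c, Matrix.mul_apply]
      have key : ∀ l : Fin (k + 1), hM L l * w.transpose l c = if l = σ.symm c then u l else 0 := by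
        intro l
        rw [hMdef, Matrix.updateRow_self, Matrix.transpose_apply, hw]
        by_cases e : l = σ.symm c
        · rw [if_pos (by rw [e, Equiv.apply_symm_apply]), mul_one, if_pos e]
        · have h2 : ¬ (c = σ l) := fun h' => e (by rw [h', Equiv.symm_apply_apply])
          rw [if_neg h2, mul_zero, if_neg e]
      rw [Finset.sum_congr rfl (fun l _ => key l), sum_ite_eq_val (σ.symm c) u, huval c]
    set a : GL (Fin (k + 1)) F := g * b⁻¹ with hadef
    refine ⟨a, b, ?_, ⟨hM, hMunit, hblk, hbw⟩, by rw [hadef, inv_mul_cancel_right]⟩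
    intro j
    have e1 : (a : Matrix (Fin (k + 1)) (Fin (k + 1)) F) L j =
        ((b : Matrix (Fin (k + 1)) (Fin (k + 1)) F) *
          ((b⁻¹ : GL (Fin (k + 1)) F) : Matrix (Fin (k + 1)) (Fin (k + 1)) F)) L j := by
      rw [hadef, Units.val_mul, Matrix.mul_apply, Matrix.mul_apply]
      exact Finset.sum_congr rfl (fun l _ => by rw [browL l])
    rw [e1, ← Units.val_mul, mul_inv_cancel, Units.val_one, Matrix.one_apply]
    by_cases e : j = L
    · subst e; simp
    · rw [if_neg e, if_neg (fun h' : L = j => e h'.symm)]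
  · -- easy direction
    rintro ⟨a, b, ha, ⟨h, hhu, hblk, hbw⟩, hg⟩
    intro j hj
    have hgb : (g : Matrix (Fin (k + 1)) (Fin (k + 1)) F) L j =
        (b : Matrix (Fin (k + 1)) (Fin (k + 1)) F) L j := by
      rw [hg, Units.val_mul, Matrix.mul_apply]
      have key : ∀ l : Fin (k + 1), (a : Matrix (Fin (k + 1)) (Fin (k + 1)) F) L l *
          (b : Matrix (Fin (k + 1)) (Fin (k + 1)) F) l j =
          if l = L then (b : Matrix (Fin (k + 1)) (Fin (k + 1)) F) l j else 0 := by
        intro l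
        rw [ha l]
        by_cases e : l = L
        · rw [if_pos e, if_pos e, one_mul]
        · rw [if_neg e, if_neg e, zero_mul]
      rw [Finset.sum_congr rfl (fun l _ => key l),
        sum_ite_eq_val L (fun l => (b : Matrix (Fin (k + 1)) (Fin (k + 1)) F) l j)]
    have e1 : ((b : Matrix (Fin (k + 1)) (Fin (k + 1)) F) * w) L (σ.symm j) =
        (b : Matrix (Fin (k + 1)) (Fin (k + 1)) F) L j := by
      rw [Matrix.mul_apply]
      have key : ∀ l : Fin (k + 1), (b : Matrix (Fin (k + 1)) (Fin (k + 1)) F) L l *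
          w l (σ.symm j) =
          if l = j then (b : Matrix (Fin (k + 1)) (Fin (k + 1)) F) L l else 0 := by
        intro l
        rw [hw, Equiv.apply_symm_apply]
        by_cases e : l = j
        · rw [if_pos e, if_pos e, mul_one]
        · rw [if_neg e, if_neg e, mul_zero]
      rw [Finset.sum_congr rfl (fun l _ => key l),
        sum_ite_eq_val j (fun l => (b : Matrix (Fin (k + 1)) (Fin (k + 1)) F) L l)]
    have e2 : (w * h) L (σ.symm j) = h L (σ.symm j) := hwmul h (σ.symm j)
    have e3 : h L (σ.symm j) = 0 := by
      apply hblk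
      have h2 : ((σ.symm j : Fin (k + 1)) : ℕ) < p - 1 := (hmem j).mpr hj
      have h1 : ¬ ((L : ℕ) < p - 1) := by rw [hLval]; omega
      intro e
      rw [eq_iff_iff] at e
      exact h1 (e.mpr h2)
    rw [hgb, ← e1, Matrix.ext_iff.mpr hbw, e2, e3]
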